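/- For all y > 1 and all real θ, the function κ(y,θ) = cos²θ · 4y²(1+3y²+y⁴)/(1+y⁴)² + sin²θ · 2(1+2y²+4y⁴+2y⁶+y⁸)/(1+y⁴)² satisfies 0 < κ(y,θ) < 5. -/

import Mathlib

theorem stmt1 (y θ : ℝ) (hy : 1 < y) :
    0 < Real.cos θ ^ 2 * (4*y^2*(1 + 3*y^2 + y^4)/(1 + y^4)^2)
        + Real.sin θ ^ 2 * (2*(1 + 2*y^2 + 4*y^4 + 2*y^6 + y^8)/(1 + y^4)^2) ∧
    Real.cos θ ^ 2 * (4*y^2*(1 + 3*y^2 + y^4)/(1 + y^4)^2)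
        + Real.sin θ ^ 2 * (2*(1 + 2*y^2 + 4*y^4 + 2*y^6 + y^8)/(1 + y^4)^2) < 5 := by
  have hy0 : (0:ℝ) < y := by linarith
  have ht : (1:ℝ) < y^2 := by nlinarith
  have hd : (0:ℝ) < (1 + y^4)^2 := by positivity
  have hcs : Real.sin θ ^ 2 + Real.cos θ ^ 2 = 1 := Real.sin_sq_add_cos_sq θ
  have hc : 0 ≤ Real.cos θ ^ 2 := sq_nonneg _
  have hs : 0 ≤ Real.sin θ ^ 2 := sq_nonneg _
  set a := 4*y^2*(1 + 3*y^2 + y^4)/(1 + y^4)^2 with ha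
  set b := 2*(1 + 2*y^2 + 4*y^4 + 2*y^6 + y^8)/(1 + y^4)^2 with hb
  have hA : 0 < a := by rw [ha]; positivity
  have hB : 0 < b := by rw [hb]; positivity
  have hA5 : a < 5 := by
    rw [ha, div_lt_iff₀ hd]
    nlinarith [mul_pos (mul_pos (sub_pos.mpr ht) (sub_pos.mpr ht))
      (show (0:ℝ) < 5*y^4 + 6*y^2 + 5 by positivity)]
  have hB5 : b < 5 := by
    rw [hb, div_lt_iff₀ hd]
    nlinarith [mul_pos (mul_pos (sub_pos.mpr ht) (sub_pos.mpr ht))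
      (show (0:ℝ) < 3*y^4 + 2*y^2 + 3 by positivity)]
  have hc' : Real.cos θ ^ 2 = 1 - Real.sin θ ^ 2 := by linarith
  rw [hc']
  have hs1 : Real.sin θ ^ 2 ≤ 1 := by linarith
  rcases le_total a b with h | h
  · constructor
    · nlinarith [mul_nonneg hs (sub_nonneg.mpr h)]
    · nlinarith [mul_nonneg (sub_nonneg.mpr hs1) (sub_nonneg.mpr h)]
  · constructor
    · nlinarith [mul_nonneg (sub_nonneg.mpr hs1) (sub_nonneg.mpr h)]
    · nlinarith [mul_nonneg hs (sub_nonneg.mpr h)]
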